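/- Fernández–Procacci bound on the log-partition function: if μ, p : P → ℝ≥0 satisfy p_x · Z_{Γ*(x)}(μ) ≤ μ_x for all x, then for every Λ ⊆ P we have Z_Λ(−p) ≥ Π_{x∈Λ}(1+μ_x)^{−1}, equivalently −log Z_Λ(−p) ≤ Σ_{x∈Λ} log(1+μ_x). -/

import Mathlib

open Finset

def indepSet {P : Type*} [DecidableEq P] (W : P → P → ℕ) (S : Finset P) : Prop :=
  ∀ x ∈ S, ∀ y ∈ S, x ≠ y → W x y = 1

instance {P : Type*} [DecidableEq P] (W : P → P → ℕ) : DecidablePred (indepSet W) :=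
  fun _ => by unfold indepSet; infer_instance

/-- Polymer partition function `Z_Λ(a) = Σ_{S ⊆ Λ independent} Π_{y ∈ S} a y`. -/
def Zpart {P : Type*} [DecidableEq P] {R : Type*} [CommRing R] (W : P → P → ℕ)
    (Λ : Finset P) (a : P → R) : R :=
  ∑ S ∈ Λ.powerset.filter (indepSet W), ∏ y ∈ S, a y

/-- `Γ*(x)`: the set of polymers incompatible with `x`. -/
def Γstar {P : Type*} [Fintype P] [DecidableEq P] (W : P → P → ℕ) (x : P) : Finset P :=
  Finset.univ.filter fun y => W x y = 0

section helpers
variable {P : Type*} [DecidableEq P] (W : P → P → ℕ)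

lemma indep_empty : indepSet W (∅ : Finset P) := by intro x hx; simp at hx

lemma indep_singleton (y : P) : indepSet W {y} := by
  intro a ha b hb hab
  simp only [mem_singleton] at ha hb
  exact absurd (ha.trans hb.symm) hab

lemma indep_subset {S T : Finset P} (h : S ⊆ T) (hT : indepSet W T) : indepSet W S :=
  fun x hx y hy => hT x (h hx) y (h hy)

lemma Zpart_empty (a : P → ℝ) : Zpart W ∅ a = 1 := by
  rw [Zpart]
  rw [Finset.powerset_empty]
  rw [Finset.filter_singleton]
  simp [indep_empty]

lemma Zpart_nonneg (Λ : Finset P) (a : P → ℝ) (ha : ∀ x, 0 ≤ a x) : 0 ≤ Zpart W Λ a := by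
  refine Finset.sum_nonneg fun S _ => Finset.prod_nonneg fun y _ => ha y

lemma Zpart_mono (a : P → ℝ) (ha : ∀ x, 0 ≤ a x) {B C : Finset P} (h : B ⊆ C) :
    Zpart W B a ≤ Zpart W C a := by
  apply Finset.sum_le_sum_of_subset_of_nonneg
  · intro S hS
    simp only [mem_filter, mem_powerset] at hS ⊢
    exact ⟨hS.1.trans h, hS.2⟩
  · intro S _ _; exact Finset.prod_nonneg fun y _ => ha y

lemma add_le_Zpart (a : P → ℝ) (ha : ∀ x, 0 ≤ a x) {Λ : Finset P} {y : P} (hy : y ∈ Λ) :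
    1 + a y ≤ Zpart W Λ a := by
  have hsub : ({∅, {y}} : Finset (Finset P)) ⊆ Λ.powerset.filter (indepSet W) := by
    intro S hS
    simp only [mem_insert, mem_singleton] at hS
    rcases hS with rfl | rfl
    · simp [indep_empty]
    · simp only [mem_filter, mem_powerset]
      exact ⟨Finset.singleton_subset_iff.2 hy, indep_singleton W y⟩
  calc 1 + a y = ∑ S ∈ ({∅, {y}} : Finset (Finset P)), ∏ z ∈ S, a z := by
        rw [Finset.sum_insert (by simpa using (Finset.singleton_ne_empty y).symm), Finset.sum_singleton]; simp
    _ ≤ _ := Finset.sum_le_sum_of_subset_of_nonneg hsub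
        (fun S _ _ => Finset.prod_nonneg fun z _ => ha z)

variable [Fintype P]

lemma mem_Γstar {x y : P} : y ∈ Γstar W x ↔ W x y = 0 := by
  simp [Γstar]

lemma Zpart_erase (hsym : ∀ x y, W x y = W y x) (h01 : ∀ x y, W x y = 0 ∨ W x y = 1)
    (a : P → ℝ) {Λ : Finset P} {y : P} (hy : y ∈ Λ) :
    Zpart W Λ a = Zpart W (Λ.erase y) a + a y * Zpart W ((Λ.erase y) \ Γstar W y) a := by
  classical
  rw [Zpart, ← Finset.sum_filter_add_sum_filter_not (Λ.powerset.filter (indepSet W))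
    (fun S => y ∉ S)]
  congr 1
  · -- sets not containing y
    rw [Zpart]
    apply Finset.sum_congr _ (fun _ _ => rfl)
    ext S
    simp only [mem_filter, mem_powerset, Finset.subset_erase]
    tauto
  · -- sets containing y
    rw [Zpart, Finset.mul_sum]
    refine Finset.sum_nbij' (fun S => S.erase y) (fun T => insert y T) ?_ ?_ ?_ ?_ ?_
    · intro S hS
      simp only [mem_filter, mem_powerset, not_not] at hS ⊢
      obtain ⟨⟨hSΛ, hind⟩, hyS⟩ := hS
      refine ⟨?_, indep_subset W (Finset.erase_subset y S) hind⟩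
      intro z hz
      rw [Finset.mem_erase] at hz
      rw [Finset.mem_sdiff, Finset.mem_erase]
      refine ⟨⟨hz.1, hSΛ hz.2⟩, ?_⟩
      rw [mem_Γstar]
      have := hind y hyS z hz.2 (Ne.symm hz.1)
      omega
    · intro T hT
      simp only [mem_filter, mem_powerset, not_not] at hT ⊢
      obtain ⟨hTsub, hind⟩ := hT
      have hTy : y ∉ T := fun h => (Finset.mem_erase.1 ((Finset.mem_sdiff.1 (hTsub h)).1)).1 rfl
      refine ⟨⟨?_, ?_⟩, Finset.mem_insert_self y T⟩
      · intro z hz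
        rcases Finset.mem_insert.1 hz with rfl | hz
        · exact hy
        · exact Finset.erase_subset y Λ (Finset.mem_sdiff.1 (hTsub hz)).1
      · intro u hu v hv huv
        have key : ∀ z ∈ T, W y z = 1 := by
          intro z hz
          have hz' : z ∉ Γstar W y := (Finset.mem_sdiff.1 (hTsub hz)).2
          rw [mem_Γstar] at hz'
          rcases h01 y z with h | h
          · exact absurd h hz'
          · exact h
        rcases Finset.mem_insert.1 hu with hu' | hu'
        · rcases Finset.mem_insert.1 hv with hv' | hv'
          · exact absurd (hu'.trans hv'.symm) huv
          · rw [hu']; exact key v hv'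
        · rcases Finset.mem_insert.1 hv with hv' | hv'
          · rw [hv', hsym]; exact key u hu'
          · exact hind u hu' v hv' huv
    · intro S hS
      simp only [mem_filter, not_not] at hS
      exact Finset.insert_erase hS.2
    · intro T hT
      simp only [mem_filter, mem_powerset] at hT
      have hTy : y ∉ T := fun h => (Finset.mem_erase.1 ((Finset.mem_sdiff.1 (hT.1 h)).1)).1 rfl
      exact Finset.erase_insert hTy
    · intro S hS
      simp only [mem_filter, not_not] at hS
      exact (Finset.mul_prod_erase S a hS.2).symm

lemma Zpart_union_le (a : P → ℝ) (ha : ∀ x, 0 ≤ a x) (B C : Finset P) :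
    Zpart W (B ∪ C) a ≤ Zpart W B a * Zpart W C a := by
  classical
  have hinj : ∀ T ∈ (B ∪ C).powerset.filter (indepSet W),
      ∀ T' ∈ (B ∪ C).powerset.filter (indepSet W),
      (fun T : Finset P => (T ∩ B, T \ B)) T = (fun T : Finset P => (T ∩ B, T \ B)) T'
      → T = T' := by
    intro T _ T' _ h
    simp only [Prod.mk.injEq] at h
    rw [← sup_inf_sdiff T B, ← sup_inf_sdiff T' B]
    change T ∩ B ∪ T \ B = T' ∩ B ∪ T' \ B
    rw [h.1, h.2]
  have key : Zpart W (B ∪ C) a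
      = ∑ q ∈ ((B ∪ C).powerset.filter (indepSet W)).image (fun T => (T ∩ B, T \ B)),
        (∏ z ∈ q.1, a z) * ∏ z ∈ q.2, a z := by
    rw [Finset.sum_image hinj, Zpart]
    exact Finset.sum_congr rfl fun T _ => (Finset.prod_inter_mul_prod_diff T B a).symm
  have hZBC : Zpart W B a * Zpart W C a
      = ∑ q ∈ (B.powerset.filter (indepSet W)) ×ˢ (C.powerset.filter (indepSet W)),
        (∏ z ∈ q.1, a z) * ∏ z ∈ q.2, a z := by
    rw [Zpart, Zpart, Finset.sum_mul_sum, Finset.sum_product]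
  rw [key, hZBC]
  apply Finset.sum_le_sum_of_subset_of_nonneg
  · intro q hq
    simp only [Finset.mem_image] at hq
    obtain ⟨T, hT, rfl⟩ := hq
    simp only [mem_filter, mem_powerset] at hT
    simp only [Finset.mem_product, mem_filter, mem_powerset]
    refine ⟨⟨Finset.inter_subset_right, indep_subset W Finset.inter_subset_left hT.2⟩,
      ⟨?_, indep_subset W (Finset.sdiff_subset) hT.2⟩⟩
    intro z hz
    rw [Finset.mem_sdiff] at hz
    rcases Finset.mem_union.1 (hT.1 hz.1) with h | h
    · exact absurd h hz.2
    · exact h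
  · intro q _ _
    exact mul_nonneg (Finset.prod_nonneg fun z _ => ha z) (Finset.prod_nonneg fun z _ => ha z)

end helpers

section main
variable {P : Type*} [Fintype P] [DecidableEq P] (W : P → P → ℕ)

lemma fp_main (hsym : ∀ x y, W x y = W y x) (hdiag : ∀ x, W x x = 0)
    (h01 : ∀ x y, W x y = 0 ∨ W x y = 1)
    (μ p : P → ℝ) (hμ : ∀ x, 0 ≤ μ x) (hp : ∀ x, 0 ≤ p x)
    (hFP : ∀ x, p x * Zpart W (Γstar W x) μ ≤ μ x) :
    ∀ n : ℕ, ∀ S : Finset P, S.card ≤ n →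
    0 < Zpart W S (fun z => -p z) ∧
    ∀ x ∉ S, p x * Zpart W (S \ Γstar W x) (fun z => -p z) * Zpart W (Γstar W x \ S) μ
        ≤ μ x * Zpart W S (fun z => -p z) := by
  intro n
  induction n with
  | zero =>
    intro S hS
    have hSe : S = ∅ := Finset.card_eq_zero.mp (Nat.le_zero.mp hS)
    subst hSe
    constructor
    · rw [Zpart_empty]; norm_num
    · intro x _
      rw [Finset.empty_sdiff, Finset.sdiff_empty, Zpart_empty]
      simpa using hFP x
  | succ n IH =>
    intro S hS
    rcases Nat.lt_or_ge S.card (n+1) with hlt | hge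
    · exact IH S (Nat.lt_succ_iff.mp hlt)
    have hcard : S.card = n + 1 := le_antisymm hS hge
    have hSne : S.Nonempty := by rw [← Finset.card_pos, hcard]; omega
    -- generic facts for any y ∈ S
    have gen : ∀ y ∈ S,
        p y * Zpart W (S.erase y \ Γstar W y) (fun z => -p z) * (1 + μ y)
          ≤ μ y * Zpart W (S.erase y) (fun z => -p z) := by
      intro y hyS
      have hcard' : (S.erase y).card = n := by rw [Finset.card_erase_of_mem hyS, hcard]; omega
      have IH' := IH (S.erase y) (le_of_eq hcard')
      have IHy := IH'.2 y (Finset.notMem_erase y S)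
      have hymem : y ∈ Γstar W y \ S.erase y :=
        Finset.mem_sdiff.2 ⟨(mem_Γstar W).2 (hdiag y), Finset.notMem_erase y S⟩
      have hc : 1 + μ y ≤ Zpart W (Γstar W y \ S.erase y) μ := add_le_Zpart W μ hμ hymem
      have hZy'pos : 0 < Zpart W (S.erase y \ Γstar W y) (fun z => -p z) := by
        refine (IH (S.erase y \ Γstar W y) ?_).1
        calc (S.erase y \ Γstar W y).card ≤ (S.erase y).card :=
              Finset.card_le_card Finset.sdiff_subset
          _ = n := hcard'
      have h0 : 0 ≤ p y * Zpart W (S.erase y \ Γstar W y) (fun z => -p z) :=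
        mul_nonneg (hp y) hZy'pos.le
      calc p y * Zpart W (S.erase y \ Γstar W y) (fun z => -p z) * (1 + μ y)
          ≤ p y * Zpart W (S.erase y \ Γstar W y) (fun z => -p z)
            * Zpart W (Γstar W y \ S.erase y) μ := by
            exact mul_le_mul_of_nonneg_left hc h0
        _ ≤ μ y * Zpart W (S.erase y) (fun z => -p z) := IHy
    -- positivity
    obtain ⟨y0, hy0⟩ := hSne
    have hcard0 : (S.erase y0).card = n := by rw [Finset.card_erase_of_mem hy0, hcard]; omega
    have IH0 := IH (S.erase y0) (le_of_eq hcard0)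
    have hid0 : Zpart W S (fun z => -p z) = Zpart W (S.erase y0) (fun z => -p z)
        + -(p y0) * Zpart W (S.erase y0 \ Γstar W y0) (fun z => -p z) := by
      simpa using Zpart_erase W hsym h01 (fun z => -p z) hy0
    have hpos : 0 < Zpart W S (fun z => -p z) := by
      have hgen0 := gen y0 hy0
      have expand : (1 + μ y0) * (Zpart W (S.erase y0) (fun z => -p z)
            - p y0 * Zpart W (S.erase y0 \ Γstar W y0) (fun z => -p z))
          = Zpart W (S.erase y0) (fun z => -p z)
            + μ y0 * Zpart W (S.erase y0) (fun z => -p z)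
            - p y0 * Zpart W (S.erase y0 \ Γstar W y0) (fun z => -p z) * (1 + μ y0) := by
        ring
      have h7 : 0 < (1 + μ y0) * (Zpart W (S.erase y0) (fun z => -p z)
            - p y0 * Zpart W (S.erase y0 \ Γstar W y0) (fun z => -p z)) := by
        have := IH0.1
        linarith
      rw [hid0]
      nlinarith [h7, hμ y0]
    refine ⟨hpos, ?_⟩
    -- main inequality
    intro x hxS
    by_cases hint : ∀ z ∈ S, z ∉ Γstar W x
    · have hd1 : S \ Γstar W x = S := by
        rw [Finset.sdiff_eq_self_iff_disjoint]
        exact Finset.disjoint_left.2 hint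
      have hd2 : Γstar W x \ S = Γstar W x := by
        rw [Finset.sdiff_eq_self_iff_disjoint]
        exact (Finset.disjoint_left.2 hint).symm
      rw [hd1, hd2]
      calc p x * Zpart W S (fun z => -p z) * Zpart W (Γstar W x) μ
          = (p x * Zpart W (Γstar W x) μ) * Zpart W S (fun z => -p z) := by ring
        _ ≤ μ x * Zpart W S (fun z => -p z) :=
            mul_le_mul_of_nonneg_right (hFP x) hpos.le
    · push_neg at hint
      obtain ⟨y, hyS, hyΓ⟩ := hint
      have hcard' : (S.erase y).card = n := by rw [Finset.card_erase_of_mem hyS, hcard]; omega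
      have IH' := IH (S.erase y) (le_of_eq hcard')
      set S' := S.erase y with hS'
      set A := Γstar W x \ S with hA
      have hxS' : x ∉ S' := fun h => hxS (Finset.erase_subset y S h)
      have hyA : y ∉ A := fun h => (Finset.mem_sdiff.1 h).2 hyS
      have fA1 : Γstar W x \ S' = insert y A := by
        ext z
        simp only [hA, hS', Finset.mem_sdiff, Finset.mem_erase, Finset.mem_insert, not_and, not_not]
        by_cases hz : z = y
        · subst hz; tauto
        · tauto
      have fA2 : S \ Γstar W x = S' \ Γstar W x := by
        ext z
        simp only [hS', Finset.mem_sdiff, Finset.mem_erase]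
        by_cases hz : z = y
        · subst hz; tauto
        · tauto
      -- abbreviations
      set c := Zpart W (Γstar W y \ S') μ with hc_def
      set ZA := Zpart W A μ with hZA_def
      set ZAy := Zpart W (insert y A) μ with hZAy_def
      set Zd := Zpart W (A \ Γstar W y) μ with hZd_def
      set Z' := Zpart W S' (fun z => -p z) with hZ'_def
      set Zx' := Zpart W (S' \ Γstar W x) (fun z => -p z) with hZx'_def
      set Zy' := Zpart W (S' \ Γstar W y) (fun z => -p z) with hZy'_def
      have IHx : p x * Zx' * ZAy ≤ μ x * Z' := by
        have := IH'.2 x hxS'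
        rw [fA1] at this
        exact this
      have IHy : p y * Zy' * c ≤ μ y * Z' := IH'.2 y (Finset.notMem_erase y S)
      have hymem : y ∈ Γstar W y \ S' :=
        Finset.mem_sdiff.2 ⟨(mem_Γstar W).2 (hdiag y), Finset.notMem_erase y S⟩
      have ivc : 1 + μ y ≤ c := add_le_Zpart W μ hμ hymem
      have iv : ZAy = ZA + μ y * Zd := by
        have h := Zpart_erase W hsym h01 μ (Finset.mem_insert_self y A)
        rw [Finset.erase_insert hyA] at h
        exact h
      have vi : ZAy ≤ Zd * c := by
        refine le_trans (Zpart_mono W μ hμ ?_) (Zpart_union_le W μ hμ _ _)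
        intro z hz
        rcases Finset.mem_insert.1 hz with rfl | hz
        · exact Finset.mem_union_right _ hymem
        · by_cases hzy : z ∈ Γstar W y
          · refine Finset.mem_union_right _ (Finset.mem_sdiff.2 ⟨hzy, ?_⟩)
            intro hzS'
            exact (Finset.mem_sdiff.1 hz).2 (Finset.erase_subset y S hzS')
          · exact Finset.mem_union_left _ (Finset.mem_sdiff.2 ⟨hz, hzy⟩)
      have hid : Zpart W S (fun z => -p z) = Z' + -(p y) * Zy' := by
        simpa using Zpart_erase W hsym h01 (fun z => -p z) hyS
      have hZ'pos : 0 < Z' := IH'.1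
      have hZx'pos : 0 < Zx' := by
        refine (IH (S' \ Γstar W x) ?_).1
        calc (S' \ Γstar W x).card ≤ S'.card := Finset.card_le_card Finset.sdiff_subset
          _ = n := hcard'
      have hZy'pos : 0 < Zy' := by
        refine (IH (S' \ Γstar W y) ?_).1
        calc (S' \ Γstar W y).card ≤ S'.card := Finset.card_le_card Finset.sdiff_subset
          _ = n := hcard'
      have hZAnn : 0 ≤ ZA := Zpart_nonneg W A μ hμ
      have hZdnn : 0 ≤ Zd := Zpart_nonneg W _ μ hμ
      have hcpos : (0:ℝ) < c := by linarith [ivc, hμ y]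
      have hcmy : (1:ℝ) ≤ c - μ y := by linarith [ivc]
      clear_value c ZA ZAy Zd Z' Zx' Zy'
      have h1 : ZA ≤ (c - μ y) * Zd := by nlinarith [iv, vi]
      have h2 : c * ZA ≤ (c - μ y) * ZAy := by
        nlinarith [mul_le_mul_of_nonneg_left h1 (hμ y), iv]
      have hpxZx : 0 ≤ p x * Zx' := mul_nonneg (hp x) hZx'pos.le
      have h3 : c * (p x * Zx' * ZA) ≤ (c - μ y) * (μ x * Z') := by
        have step1 := mul_le_mul_of_nonneg_left h2 hpxZx
        have step2 := mul_le_mul_of_nonneg_left IHx (by linarith : (0:ℝ) ≤ c - μ y)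
        linarith [step1, step2]
      have h4 : c * (μ x * (p y * Zy')) ≤ μ x * (μ y * Z') := by
        have := mul_le_mul_of_nonneg_left IHy (hμ x)
        linarith [this]
      have key : p x * Zx' * ZA + μ x * (p y * Zy') ≤ μ x * Z' := by
        rw [← mul_le_mul_iff_right₀ hcpos]
        ring_nf
        ring_nf at h3 h4
        have h5 := add_le_add h3 h4
        linarith [h5]
      rw [fA2, hid, ← hZx'_def]
      have expand : μ x * (Z' + -(p y) * Zy') = μ x * Z' - μ x * (p y * Zy') := by ring
      linarith [key, expand]

end main

theorem fp_log_partition_bound {P : Type*} [Fintype P] [DecidableEq P] (W : P → P → ℕ)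
    (hsym : ∀ x y, W x y = W y x) (hdiag : ∀ x, W x x = 0)
    (h01 : ∀ x y, W x y = 0 ∨ W x y = 1)
    (μ p : P → ℝ) (hμ : ∀ x, 0 ≤ μ x) (hp : ∀ x, 0 ≤ p x)
    (hFP : ∀ x, p x * Zpart W (Γstar W x) μ ≤ μ x)
    (Λ : Finset P) :
    (∏ x ∈ Λ, (1 + μ x)⁻¹) ≤ Zpart W Λ (fun y => -p y) := by
  classical
  have main := fp_main W hsym hdiag h01 μ p hμ hp hFP
  induction Λ using Finset.induction_on with
  | empty => rw [Finset.prod_empty, Zpart_empty]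
  | @insert y Λ' hy IH =>
    have hid : Zpart W (insert y Λ') (fun z => -p z)
        = Zpart W Λ' (fun z => -p z)
          + -(p y) * Zpart W (Λ' \ Γstar W y) (fun z => -p z) := by
      have h := Zpart_erase W hsym h01 (fun z => -p z) (Finset.mem_insert_self y Λ')
      rw [Finset.erase_insert hy] at h
      exact h
    have hZ'pos : 0 < Zpart W Λ' (fun z => -p z) := (main Λ'.card Λ' le_rfl).1
    have hZypos : 0 < Zpart W (Λ' \ Γstar W y) (fun z => -p z) :=
      (main (Λ' \ Γstar W y).card _ le_rfl).1
    have P2 := (main Λ'.card Λ' le_rfl).2 y hy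
    have hymem : y ∈ Γstar W y \ Λ' :=
      Finset.mem_sdiff.2 ⟨(mem_Γstar W).2 (hdiag y), hy⟩
    have hc : 1 + μ y ≤ Zpart W (Γstar W y \ Λ') μ := add_le_Zpart W μ hμ hymem
    have hstep : p y * Zpart W (Λ' \ Γstar W y) (fun z => -p z) * (1 + μ y)
        ≤ μ y * Zpart W Λ' (fun z => -p z) :=
      le_trans (mul_le_mul_of_nonneg_left hc
        (mul_nonneg (hp y) hZypos.le)) P2
    have hμy1 : (0:ℝ) < 1 + μ y := by linarith [hμ y]
    rw [Finset.prod_insert hy, hid]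
    calc (1 + μ y)⁻¹ * ∏ x ∈ Λ', (1 + μ x)⁻¹
        ≤ (1 + μ y)⁻¹ * Zpart W Λ' (fun z => -p z) :=
          mul_le_mul_of_nonneg_left IH (inv_nonneg.2 hμy1.le)
      _ ≤ Zpart W Λ' (fun z => -p z)
            + -(p y) * Zpart W (Λ' \ Γstar W y) (fun z => -p z) := by
          rw [inv_mul_le_iff₀ hμy1]
          have expand : (1 + μ y) * (Zpart W Λ' (fun z => -p z)
                + -(p y) * Zpart W (Λ' \ Γstar W y) (fun z => -p z))
              = Zpart W Λ' (fun z => -p z) + μ y * Zpart W Λ' (fun z => -p z)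
                - p y * Zpart W (Λ' \ Γstar W y) (fun z => -p z) * (1 + μ y) := by ring
          linarith [hstep, expand]
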